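/- Let X₁, X₂ be real Banach spaces and X = X₁ × X₂ with norm ‖(x,y)‖ = (‖x‖² + ‖y‖²)^{1/2}. Let A₁ : X₁ → X₁ be a bounded linear operator with ‖exp(−sA₁)‖ ≤ 1 for all s ≥ 0 and B₁ : X₂ → X₁ a bounded linear operator. Define the split-step operator T₁(τ) : X → X by T₁(τ)(x,y) = (exp(−τA₁)x + (∫₀^τ exp(−σA₁) dσ)(B₁ y), y). Then for all τ ≥ 0, the operator norm satisfies ‖T₁(τ)‖ ≤ 1 + τ‖B₁‖. -/

import Mathlib

noncomputable section

open scoped Topology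

variable {X₁ X₂ : Type*} [NormedAddCommGroup X₁] [NormedSpace ℝ X₁] [CompleteSpace X₁]
  [NormedAddCommGroup X₂] [NormedSpace ℝ X₂] [CompleteSpace X₂]

/-- The operator exponential `exp (-τ A)` of a bounded operator `A`. -/
def expOp {X : Type*} [NormedAddCommGroup X] [NormedSpace ℝ X] [CompleteSpace X]
    (A : X →L[ℝ] X) (τ : ℝ) : X →L[ℝ] X :=
  NormedSpace.exp (-(τ • A))

/-- The coupling operator `X(τ) = (∫₀^τ exp(-σ A) dσ) ∘ B`. -/
def Xop {X Y : Type*} [NormedAddCommGroup X] [NormedSpace ℝ X] [CompleteSpace X]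
    [NormedAddCommGroup Y] [NormedSpace ℝ Y] (A : X →L[ℝ] X) (B : Y →L[ℝ] X) (τ : ℝ) :
    Y →L[ℝ] X :=
  (∫ σ in (0:ℝ)..τ, expOp A σ).comp B

/-- Lift of a block operator on `X₁ × X₂` to the `ℓ²`-product space
`X = X₁ × X₂` with norm `‖(x,y)‖ = (‖x‖² + ‖y‖²)^(1/2)`. -/
def toL2 (M : (X₁ × X₂) →L[ℝ] (X₁ × X₂)) :
    WithLp 2 (X₁ × X₂) →L[ℝ] WithLp 2 (X₁ × X₂) :=
  ((WithLp.prodContinuousLinearEquiv 2 ℝ X₁ X₂).symm.toContinuousLinearMap.comp M).comp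
    (WithLp.prodContinuousLinearEquiv 2 ℝ X₁ X₂).toContinuousLinearMap

/-- The split-step operator `T₁(τ)(x,y) = (exp(-τA₁)x + X₁(τ)y, y)`. -/
def T1 (A₁ : X₁ →L[ℝ] X₁) (B₁ : X₂ →L[ℝ] X₁) (τ : ℝ) :
    WithLp 2 (X₁ × X₂) →L[ℝ] WithLp 2 (X₁ × X₂) :=
  toL2 (((expOp A₁ τ).coprod (Xop A₁ B₁ τ)).prod (ContinuousLinearMap.snd ℝ X₁ X₂))

/-- The split-step operator `T₂(τ)(x,y) = (x, X₂(τ)x + exp(-τA₂)y)`. -/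
def T2 (A₂ : X₂ →L[ℝ] X₂) (B₂ : X₁ →L[ℝ] X₂) (τ : ℝ) :
    WithLp 2 (X₁ × X₂) →L[ℝ] WithLp 2 (X₁ × X₂) :=
  toL2 ((ContinuousLinearMap.fst ℝ X₁ X₂).prod ((Xop A₂ B₂ τ).coprod (expOp A₂ τ)))

/-- The split-step approximation operator `T(τ) = T₂(τ) ∘ T₁(τ)`. -/
def Tfull (A₁ : X₁ →L[ℝ] X₁) (A₂ : X₂ →L[ℝ] X₂) (B₁ : X₂ →L[ℝ] X₁) (B₂ : X₁ →L[ℝ] X₂)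
    (τ : ℝ) : WithLp 2 (X₁ × X₂) →L[ℝ] WithLp 2 (X₁ × X₂) :=
  (T2 A₂ B₂ τ).comp (T1 A₁ B₁ τ)

/-- The full operator `𝓒(x,y) = (A₁x - B₁y, A₂y - B₂x)`. -/
def opC (A₁ : X₁ →L[ℝ] X₁) (A₂ : X₂ →L[ℝ] X₂) (B₁ : X₂ →L[ℝ] X₁) (B₂ : X₁ →L[ℝ] X₂) :
    WithLp 2 (X₁ × X₂) →L[ℝ] WithLp 2 (X₁ × X₂) :=
  toL2 ((A₁.coprod (-B₁)).prod ((-B₂).coprod A₂))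

/-- The diagonal operator `𝓐(x,y) = (A₁x, A₂y)`. -/
def opA (A₁ : X₁ →L[ℝ] X₁) (A₂ : X₂ →L[ℝ] X₂) :
    WithLp 2 (X₁ × X₂) →L[ℝ] WithLp 2 (X₁ × X₂) :=
  toL2 (A₁.prodMap A₂)

/-- The off-diagonal coupling operator `𝓑(x,y) = (B₁y, B₂x)`. -/
def opB (B₁ : X₂ →L[ℝ] X₁) (B₂ : X₁ →L[ℝ] X₂) :
    WithLp 2 (X₁ × X₂) →L[ℝ] WithLp 2 (X₁ × X₂) :=
  toL2 (((0 : X₁ →L[ℝ] X₁).coprod B₁).prod (B₂.coprod (0 : X₂ →L[ℝ] X₂)))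

/-- If the exponentials `exp(-sA₁)` are contractions, then the split-step operator
`T₁(τ)(x,y) = (exp(-τA₁)x + X₁(τ)y, y)` satisfies `‖T₁(τ)‖ ≤ 1 + τ‖B₁‖`. -/
theorem T1_norm_le (A₁ : X₁ →L[ℝ] X₁) (B₁ : X₂ →L[ℝ] X₁)
    (hA₁ : ∀ s : ℝ, 0 ≤ s → ‖expOp A₁ s‖ ≤ 1) :
    ∀ τ : ℝ, 0 ≤ τ → ‖T1 (X₂ := X₂) A₁ B₁ τ‖ ≤ 1 + τ * ‖B₁‖ := by
  intro τ hτ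
  have hX : ‖Xop A₁ B₁ τ‖ ≤ τ * ‖B₁‖ := by
    calc ‖Xop A₁ B₁ τ‖ ≤ ‖∫ σ in (0:ℝ)..τ, expOp A₁ σ‖ * ‖B₁‖ :=
          ContinuousLinearMap.opNorm_comp_le _ _
      _ ≤ (1 * |τ - 0|) * ‖B₁‖ := by
          refine mul_le_mul_of_nonneg_right ?_ (norm_nonneg _)
          exact intervalIntegral.norm_integral_le_of_norm_le_const fun s hs => by
            rw [Set.uIoc_of_le hτ] at hs
            exact hA₁ s hs.1.le
      _ = τ * ‖B₁‖ := by rw [sub_zero, abs_of_nonneg hτ, one_mul]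
  apply ContinuousLinearMap.opNorm_le_bound _ (by positivity)
  intro v
  set x := v.fst with hx
  set y := v.snd with hy
  have hsplit : T1 A₁ B₁ τ v =
      (WithLp.equiv 2 (X₁ × X₂)).symm (expOp A₁ τ x, y)
        + (WithLp.equiv 2 (X₁ × X₂)).symm (Xop A₁ B₁ τ y, (0 : X₂)) := by
    rw [WithLp.equiv_symm_apply, ← WithLp.toLp_add, Prod.mk_add_mk, add_zero]
    rfl
  have hvsq := WithLp.prod_norm_sq_eq_of_L2 v
  have hy_le : ‖y‖ ≤ ‖v‖ := by
    nlinarith [norm_nonneg v, norm_nonneg x, norm_nonneg y]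
  have h1 : ‖(WithLp.equiv 2 (X₁ × X₂)).symm (expOp A₁ τ x, y)‖ ≤ ‖v‖ := by
    have e1 := WithLp.prod_norm_sq_eq_of_L2 ((WithLp.equiv 2 (X₁ × X₂)).symm (expOp A₁ τ x, y))
    change _ = ‖expOp A₁ τ x‖ ^ 2 + ‖y‖ ^ 2 at e1
    have hex : ‖expOp A₁ τ x‖ ≤ ‖x‖ := by
      calc ‖expOp A₁ τ x‖ ≤ ‖expOp A₁ τ‖ * ‖x‖ := (expOp A₁ τ).le_opNorm x
        _ ≤ 1 * ‖x‖ := mul_le_mul_of_nonneg_right (hA₁ τ hτ) (norm_nonneg _)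
        _ = ‖x‖ := one_mul _
    have hsq : ‖(WithLp.equiv 2 (X₁ × X₂)).symm (expOp A₁ τ x, y)‖ ^ 2 ≤ ‖v‖ ^ 2 := by
      rw [e1, hvsq]; nlinarith [norm_nonneg (expOp A₁ τ x), norm_nonneg x]
    exact (pow_le_pow_iff_left₀ (norm_nonneg _) (norm_nonneg _) two_ne_zero).mp hsq
  have h2 : ‖(WithLp.equiv 2 (X₁ × X₂)).symm (Xop A₁ B₁ τ y, (0 : X₂))‖ ≤ τ * ‖B₁‖ * ‖v‖ := by
    rw [WithLp.equiv_symm_apply, WithLp.norm_toLp_fst]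
    calc ‖Xop A₁ B₁ τ y‖ ≤ ‖Xop A₁ B₁ τ‖ * ‖y‖ := (Xop A₁ B₁ τ).le_opNorm y
      _ ≤ (τ * ‖B₁‖) * ‖v‖ := by
          exact mul_le_mul hX hy_le (norm_nonneg _) (by positivity)
  calc ‖T1 A₁ B₁ τ v‖ ≤ ‖(WithLp.equiv 2 (X₁ × X₂)).symm (expOp A₁ τ x, y)‖
        + ‖(WithLp.equiv 2 (X₁ × X₂)).symm (Xop A₁ B₁ τ y, (0 : X₂))‖ := by
        rw [hsplit]; exact norm_add_le _ _
    _ ≤ ‖v‖ + τ * ‖B₁‖ * ‖v‖ := add_le_add h1 h2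
    _ = (1 + τ * ‖B₁‖) * ‖v‖ := by ring
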